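/- arXiv:2012.15726 — 3 statements merged into one kernel-verified Lean document; each statement's English description precedes it below -/
import Mathlib

section
/- Let M, N be d×d positive definite real symmetric matrices with M ⪯ N. Then log(M) ⪯ log(N), i.e., the matrix logarithm is operator monotone on positive definite matrices. -/
open Matrix

/-- Applying a scalar function to a real symmetric matrix through its spectral
decomposition. -/
noncomputable def matFun {d : ℕ} (f : ℝ → ℝ) (M : Matrix (Fin d) (Fin d) ℝ)
    (hM : M.IsHermitian) : Matrix (Fin d) (Fin d) ℝ :=
  (hM.eigenvectorUnitary : Matrix (Fin d) (Fin d) ℝ) * diagonal (f ∘ hM.eigenvalues) *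
    star (hM.eigenvectorUnitary : Matrix (Fin d) (Fin d) ℝ)

open MeasureTheory Set Filter in
/-- The scalar integral representation of the logarithm. -/
lemma log_hasDerivAt (a : ℝ) (ha : 0 < a) (t : ℝ) (ht : (0:ℝ) ≤ t) :
    HasDerivAt (fun s => Real.log (1 + s) - Real.log (a + s))
      ((1 + t)⁻¹ - (a + t)⁻¹) t := by
  have h1 : (0:ℝ) < 1 + t := by linarith
  have h2 : (0:ℝ) < a + t := by linarith
  have d1 : HasDerivAt (fun s : ℝ => Real.log (1 + s)) (1 / (1 + t)) t := by
    simpa using ((hasDerivAt_const t (1:ℝ)).add (hasDerivAt_id t)).log h1.ne'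
  have d2 : HasDerivAt (fun s : ℝ => Real.log (a + s)) (1 / (a + t)) t := by
    simpa using ((hasDerivAt_const t a).add (hasDerivAt_id t)).log h2.ne'
  simpa [one_div] using d1.fun_sub d2

open MeasureTheory Set Filter in
lemma log_tendsto (a : ℝ) (ha : 0 < a) :
    Tendsto (fun s => Real.log (1 + s) - Real.log (a + s)) atTop (nhds 0) := by
  have h0 : Tendsto (fun s : ℝ => (1 - a) / (a + s)) atTop (nhds 0) :=
    Tendsto.div_atTop tendsto_const_nhds (tendsto_atTop_add_const_left _ a tendsto_id)
  have h1 : Tendsto (fun s : ℝ => 1 + (1 - a) / (a + s)) atTop (nhds 1) := by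
    simpa using tendsto_const_nhds.add h0
  have h2 : Tendsto (fun s : ℝ => Real.log (1 + (1 - a) / (a + s))) atTop (nhds 0) := by
    have := (Real.continuousAt_log one_ne_zero).tendsto.comp h1
    simpa [Function.comp_def] using this
  refine h2.congr' ?_
  filter_upwards [eventually_gt_atTop 0] with s hs
  have h1s : (0:ℝ) < 1 + s := by linarith
  have has : (0:ℝ) < a + s := by linarith
  rw [show 1 + (1 - a) / (a + s) = (1 + s) / (a + s) by field_simp; ring,
    Real.log_div h1s.ne' has.ne']

open MeasureTheory Set Filter in
lemma log_integral (a : ℝ) (ha : 0 < a) :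
    (∫ t in Ioi (0:ℝ), ((1 + t)⁻¹ - (a + t)⁻¹)) = Real.log a ∧
      IntegrableOn (fun t => (1 + t)⁻¹ - (a + t)⁻¹) (Ioi (0:ℝ)) := by
  have hderiv : ∀ t ∈ Ici (0:ℝ), HasDerivAt (fun s => Real.log (1 + s) - Real.log (a + s))
      ((1 + t)⁻¹ - (a + t)⁻¹) t := fun t ht => log_hasDerivAt a ha t ht
  have htend := log_tendsto a ha
  have hF0 : Real.log (1 + 0) - Real.log (a + 0) = -Real.log a := by simp
  rcases le_total a 1 with hle | hle
  · have hsign : ∀ t ∈ Ioi (0:ℝ), (1 + t)⁻¹ - (a + t)⁻¹ ≤ 0 := by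
      intro t ht
      have h2 : (0:ℝ) < a + t := by linarith [ht.out]
      have : (1 + t)⁻¹ ≤ (a + t)⁻¹ := by gcongr
      linarith
    refine ⟨?_, integrableOn_Ioi_deriv_of_nonpos' hderiv hsign htend⟩
    rw [integral_Ioi_of_hasDerivAt_of_nonpos' hderiv hsign htend]
    simp
  · have hsign : ∀ t ∈ Ioi (0:ℝ), 0 ≤ (1 + t)⁻¹ - (a + t)⁻¹ := by
      intro t ht
      have h1 : (0:ℝ) < 1 + t := by linarith [ht.out]
      have : (a + t)⁻¹ ≤ (1 + t)⁻¹ := by gcongr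
      linarith
    refine ⟨?_, integrableOn_Ioi_deriv_of_nonneg' hderiv hsign htend⟩
    rw [integral_Ioi_of_hasDerivAt_of_nonneg' hderiv hsign htend]
    simp

section MatFun

variable {d : ℕ} {A : Matrix (Fin d) (Fin d) ℝ}

lemma matFun_isHermitian (f : ℝ → ℝ) (hA : A.IsHermitian) :
    (matFun f A hA).IsHermitian := by
  unfold matFun
  rw [Matrix.star_eq_conjTranspose]
  exact isHermitian_mul_mul_conjTranspose _ (isHermitian_diagonal _)

lemma matFun_mul (f g : ℝ → ℝ) (hA : A.IsHermitian) :
    matFun f A hA * matFun g A hA = matFun (fun x => f x * g x) A hA := by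
  unfold matFun
  have hU : star (hA.eigenvectorUnitary : Matrix (Fin d) (Fin d) ℝ) *
      (hA.eigenvectorUnitary : Matrix (Fin d) (Fin d) ℝ) = 1 :=
    Matrix.mem_unitaryGroup_iff'.mp hA.eigenvectorUnitary.2
  calc (hA.eigenvectorUnitary : Matrix (Fin d) (Fin d) ℝ) * diagonal (f ∘ hA.eigenvalues) *
        star (hA.eigenvectorUnitary : Matrix (Fin d) (Fin d) ℝ) *
        ((hA.eigenvectorUnitary : Matrix (Fin d) (Fin d) ℝ) * diagonal (g ∘ hA.eigenvalues) *
        star (hA.eigenvectorUnitary : Matrix (Fin d) (Fin d) ℝ))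
      = (hA.eigenvectorUnitary : Matrix (Fin d) (Fin d) ℝ) *
        (diagonal (f ∘ hA.eigenvalues) * diagonal (g ∘ hA.eigenvalues)) *
        star (hA.eigenvectorUnitary : Matrix (Fin d) (Fin d) ℝ) := by
        rw [Matrix.mul_assoc, Matrix.mul_assoc, Matrix.mul_assoc, ← Matrix.mul_assoc
          (star (hA.eigenvectorUnitary : Matrix (Fin d) (Fin d) ℝ)), hU, Matrix.one_mul,
          ← Matrix.mul_assoc, ← Matrix.mul_assoc, Matrix.mul_assoc _ _ (diagonal _)]
    _ = _ := by rw [diagonal_mul_diagonal]; rfl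

lemma matFun_congr (f g : ℝ → ℝ) (hA : A.IsHermitian)
    (h : ∀ i, f (hA.eigenvalues i) = g (hA.eigenvalues i)) :
    matFun f A hA = matFun g A hA := by
  unfold matFun
  congr 2
  exact congrArg diagonal (funext fun i => h i)

lemma matFun_const_one (hA : A.IsHermitian) : matFun (fun _ => 1) A hA = 1 := by
  unfold matFun
  have hU : (hA.eigenvectorUnitary : Matrix (Fin d) (Fin d) ℝ) *
      star (hA.eigenvectorUnitary : Matrix (Fin d) (Fin d) ℝ) = 1 :=
    Matrix.mem_unitaryGroup_iff.mp hA.eigenvectorUnitary.2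
  have : diagonal ((fun _ : ℝ => (1:ℝ)) ∘ hA.eigenvalues) = 1 := Matrix.diagonal_one
  rw [this, Matrix.mul_one, hU]

lemma matFun_add (f g : ℝ → ℝ) (hA : A.IsHermitian) :
    matFun f A hA + matFun g A hA = matFun (fun x => f x + g x) A hA := by
  unfold matFun
  rw [← Matrix.add_mul, ← Matrix.mul_add, diagonal_add]
  rfl

lemma matFun_id (hA : A.IsHermitian) : matFun (fun x => x) A hA = A := by
  have := hA.spectral_theorem
  rw [Unitary.conjStarAlgAut_apply] at this
  unfold matFun
  exact this.symm

lemma matFun_const (c : ℝ) (hA : A.IsHermitian) :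
    matFun (fun _ => c) A hA = c • (1 : Matrix (Fin d) (Fin d) ℝ) := by
  unfold matFun
  have hU : (hA.eigenvectorUnitary : Matrix (Fin d) (Fin d) ℝ) *
      star (hA.eigenvectorUnitary : Matrix (Fin d) (Fin d) ℝ) = 1 :=
    Matrix.mem_unitaryGroup_iff.mp hA.eigenvectorUnitary.2
  have : diagonal ((fun _ : ℝ => c) ∘ hA.eigenvalues) = c • (1 : Matrix (Fin d) (Fin d) ℝ) := by
    rw [show ((fun _ : ℝ => c) ∘ hA.eigenvalues) = c • (fun _ => (1:ℝ)) from
      funext fun i => by simp, diagonal_smul, diagonal_one]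
  rw [this, Matrix.mul_smul, Matrix.mul_one, Matrix.smul_mul, hU]

lemma add_smul_one_eq (t : ℝ) (hA : A.IsHermitian) :
    A + t • (1 : Matrix (Fin d) (Fin d) ℝ) = matFun (fun u => u + t) A hA := by
  have h := matFun_add (fun x => x) (fun _ => t) hA
  rw [matFun_id, matFun_const] at h
  exact h

lemma matFun_inv (t : ℝ) (hA : A.IsHermitian)
    (h : ∀ i, hA.eigenvalues i + t ≠ 0) :
    (A + t • (1 : Matrix (Fin d) (Fin d) ℝ))⁻¹ = matFun (fun u => (u + t)⁻¹) A hA := by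
  refine (Matrix.inv_eq_left_inv ?_)
  rw [add_smul_one_eq t hA, matFun_mul]
  rw [matFun_congr _ (fun _ => 1) hA (fun i => inv_mul_cancel₀ (h i))]
  exact matFun_const_one hA

lemma dot_matFun (f : ℝ → ℝ) (hA : A.IsHermitian) (x : Fin d → ℝ) :
    x ⬝ᵥ (matFun f A hA *ᵥ x) =
      ∑ i, f (hA.eigenvalues i) *
        ((star (hA.eigenvectorUnitary : Matrix (Fin d) (Fin d) ℝ) *ᵥ x) i)^2 := by
  set U : Matrix (Fin d) (Fin d) ℝ := (hA.eigenvectorUnitary : Matrix (Fin d) (Fin d) ℝ) with hUdef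
  have hstar : star U = Uᵀ := by
    rw [Matrix.star_eq_conjTranspose]
    ext i j
    simp [Matrix.conjTranspose_apply]
  set y : Fin d → ℝ := star U *ᵥ x with hy
  have hmv : matFun f A hA *ᵥ x = U *ᵥ (diagonal (f ∘ hA.eigenvalues) *ᵥ y) := by
    unfold matFun
    rw [mulVec_mulVec, mulVec_mulVec, ← hUdef]
  rw [hmv, Matrix.dotProduct_mulVec]
  have hxU : x ᵥ* U = y := by rw [hy, hstar, mulVec_transpose]
  rw [hxU]
  simp only [mulVec_diagonal, dotProduct, Function.comp_apply]
  exact Finset.sum_congr rfl fun i _ => by ring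

lemma sum_sq_eigen (hA : A.IsHermitian) (x : Fin d → ℝ) :
    ∑ i, ((star (hA.eigenvectorUnitary : Matrix (Fin d) (Fin d) ℝ) *ᵥ x) i)^2 = x ⬝ᵥ x := by
  set U : Matrix (Fin d) (Fin d) ℝ := (hA.eigenvectorUnitary : Matrix (Fin d) (Fin d) ℝ) with hUdef
  have hU : U * star U = 1 := Matrix.mem_unitaryGroup_iff.mp hA.eigenvectorUnitary.2
  have hstar : star U = Uᵀ := by
    rw [Matrix.star_eq_conjTranspose]
    ext i j
    simp [Matrix.conjTranspose_apply]
  set y : Fin d → ℝ := star U *ᵥ x with hy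
  have h1 : ∑ i, (y i)^2 = y ⬝ᵥ y := by
    simp [dotProduct, pow_two]
  rw [h1, hy, hstar, Matrix.dotProduct_mulVec, Matrix.vecMul_transpose,
    Matrix.mulVec_mulVec]
  rw [show U * Uᵀ = 1 by rw [← hstar]; exact hU]
  simp

end MatFun

section InvAntitone

variable {d : ℕ}

open scoped MatrixOrder

lemma sqrt_invertible {A : Matrix (Fin d) (Fin d) ℝ} (hA : A.PosDef) :
    (CFC.sqrt A).det ≠ 0 := by
  intro h
  have h2 := CFC.sqrt_mul_sqrt_self A hA.posSemidef.nonneg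
  have := congrArg Matrix.det h2
  rw [Matrix.det_mul, h, mul_zero] at this
  exact hA.det_pos.ne' this.symm

lemma inv_sub_one_psd {A : Matrix (Fin d) (Fin d) ℝ} (hA : A.PosDef)
    (h : ((1 : Matrix (Fin d) (Fin d) ℝ) - A).PosSemidef) :
    (A⁻¹ - 1).PosSemidef := by
  set S : Matrix (Fin d) (Fin d) ℝ := CFC.sqrt A⁻¹ with hSdef
  have hS2 : S * S = A⁻¹ := CFC.sqrt_mul_sqrt_self A⁻¹ hA.inv.posSemidef.nonneg
  have hSH : S.IsHermitian := (Matrix.nonneg_iff_posSemidef.mp (CFC.sqrt_nonneg A⁻¹)).1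
  have hdetS : S.det ≠ 0 := sqrt_invertible hA.inv
  have hAinv : A * A⁻¹ = 1 := Matrix.mul_nonsing_inv A hA.det_pos.ne'.isUnit
  have hASS : A * S * S = 1 := by rw [Matrix.mul_assoc, hS2, hAinv]
  have hSSA : S * (S * A) = 1 := by
    rw [← Matrix.mul_assoc, hS2, Matrix.nonsing_inv_mul A hA.det_pos.ne'.isUnit]
  have hSinv1 : S⁻¹ = S * A := Matrix.inv_eq_right_inv hSSA
  have hSAS : S * A * S = 1 := by
    rw [← hSinv1]
    exact Matrix.nonsing_inv_mul S hdetS.isUnit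
  have key : S * (1 - A) * Sᴴ = A⁻¹ - 1 := by
    rw [hSH.eq, Matrix.mul_sub, Matrix.mul_one, Matrix.sub_mul, hS2, hSAS]
  have := h.mul_mul_conjTranspose_same S
  rwa [key] at this

lemma posDef_conj {A C : Matrix (Fin d) (Fin d) ℝ} (hA : A.PosDef)
    (hCH : C.IsHermitian) (hdetC : C.det ≠ 0) : (C * A * C).PosDef := by
  refine posDef_iff_dotProduct_mulVec.mpr ⟨?_, ?_⟩
  · have : (C * A * Cᴴ).IsHermitian := Matrix.isHermitian_mul_mul_conjTranspose _ hA.1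
    rwa [hCH.eq] at this
  · intro x hx
    have hCx : C *ᵥ x ≠ 0 := by
      intro h0
      apply hx
      have := congrArg (fun v => C⁻¹ *ᵥ v) h0
      simpa [Matrix.mulVec_mulVec, Matrix.nonsing_inv_mul C hdetC.isUnit] using this
    have hq := hA.dotProduct_mulVec_pos hCx
    rw [star_trivial] at hq ⊢
    have hsym : Cᵀ = C := by
      rw [← Matrix.conjTranspose_eq_transpose_of_trivial, hCH.eq]
    have e1 : (C * A * C) *ᵥ x = C *ᵥ (A *ᵥ (C *ᵥ x)) := by
      simp [Matrix.mulVec_mulVec, Matrix.mul_assoc]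
    rw [e1, Matrix.dotProduct_mulVec, ← Matrix.mulVec_transpose, hsym]
    exact hq

set_option maxHeartbeats 1000000 in
lemma inv_antitone {M N : Matrix (Fin d) (Fin d) ℝ} (hM : M.PosDef) (hN : N.PosDef)
    (h : (N - M).PosSemidef) : (M⁻¹ - N⁻¹).PosSemidef := by
  set C : Matrix (Fin d) (Fin d) ℝ := CFC.sqrt N⁻¹ with hCdef
  have hC2 : C * C = N⁻¹ := CFC.sqrt_mul_sqrt_self N⁻¹ hN.inv.posSemidef.nonneg
  have hCH : C.IsHermitian := (Matrix.nonneg_iff_posSemidef.mp (CFC.sqrt_nonneg N⁻¹)).1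
  have hdetC : C.det ≠ 0 := sqrt_invertible hN.inv
  have hNinv : N * N⁻¹ = 1 := Matrix.mul_nonsing_inv N hN.det_pos.ne'.isUnit
  have hCCN : C * (C * N) = 1 := by
    rw [← Matrix.mul_assoc, hC2, Matrix.nonsing_inv_mul N hN.det_pos.ne'.isUnit]
  have hCinv : C⁻¹ = C * N := Matrix.inv_eq_right_inv hCCN
  have hCNC : C * N * C = 1 := by
    rw [← hCinv]; exact Matrix.nonsing_inv_mul C hdetC.isUnit
  have hCMC : (C * M * C).PosDef := posDef_conj hM hCH hdetC
  have h1 : ((1 : Matrix (Fin d) (Fin d) ℝ) - C * M * C).PosSemidef := by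
    have := h.mul_mul_conjTranspose_same C
    rw [hCH.eq] at this
    rwa [Matrix.mul_sub, Matrix.sub_mul, hCNC] at this
  have h2 := inv_sub_one_psd hCMC h1
  have hinv : (C * M * C)⁻¹ = C⁻¹ * M⁻¹ * C⁻¹ := by
    rw [Matrix.mul_inv_rev, Matrix.mul_inv_rev, Matrix.mul_assoc]
  have h3 := h2.mul_mul_conjTranspose_same C
  have key : C * ((C * M * C)⁻¹ - 1) * Cᴴ = M⁻¹ - N⁻¹ := by
    rw [hCH.eq, hinv, Matrix.mul_sub, Matrix.sub_mul, Matrix.mul_one]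
    congr 1
    rw [← Matrix.mul_assoc, ← Matrix.mul_assoc, Matrix.mul_nonsing_inv C hdetC.isUnit,
        Matrix.one_mul, Matrix.mul_assoc, Matrix.nonsing_inv_mul C hdetC.isUnit, Matrix.mul_one]
  rwa [key] at h3

end InvAntitone

set_option maxHeartbeats 1000000 in
open MeasureTheory Set in
/-- **Operator monotonicity of the logarithm.** If `M ⪯ N` are positive definite
real symmetric matrices, then `log M ⪯ log N`. -/
theorem log_monotone {d : ℕ} (M N : Matrix (Fin d) (Fin d) ℝ)
    (hM : M.PosDef) (hN : N.PosDef) (hMN : (N - M).PosSemidef) :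
    (matFun Real.log N hN.1 - matFun Real.log M hM.1).PosSemidef := by
  refine posSemidef_iff_dotProduct_mulVec.mpr ⟨?_, ?_⟩
  · exact (matFun_isHermitian Real.log hN.1).sub (matFun_isHermitian Real.log hM.1)
  intro x
  rw [star_trivial, sub_mulVec, dotProduct_sub, sub_nonneg]
  set lam : Fin d → ℝ := hM.1.eigenvalues with hlamdef
  set mu : Fin d → ℝ := hN.1.eigenvalues with hmudef
  set a : Fin d → ℝ :=
    fun i => ((star (hM.1.eigenvectorUnitary : Matrix (Fin d) (Fin d) ℝ) *ᵥ x) i)^2 with hadef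
  set b : Fin d → ℝ :=
    fun i => ((star (hN.1.eigenvectorUnitary : Matrix (Fin d) (Fin d) ℝ) *ᵥ x) i)^2 with hbdef
  have ha0 : ∀ i, 0 ≤ a i := fun i => sq_nonneg _
  have hb0 : ∀ i, 0 ≤ b i := fun i => sq_nonneg _
  have hlam : ∀ i, 0 < lam i := fun i => hM.eigenvalues_pos i
  have hmu : ∀ i, 0 < mu i := fun i => hN.eigenvalues_pos i
  have hsum : ∑ i, a i = ∑ i, b i := by
    rw [hadef, hbdef]
    simp only
    rw [sum_sq_eigen hM.1 x, sum_sq_eigen hN.1 x]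
  -- the two integrands
  set gM : ℝ → ℝ := fun t => ∑ i, a i * ((1 + t)⁻¹ - (lam i + t)⁻¹) with hgMdef
  set gN : ℝ → ℝ := fun t => ∑ i, b i * ((1 + t)⁻¹ - (mu i + t)⁻¹) with hgNdef
  have hgMint : IntegrableOn gM (Ioi (0:ℝ)) :=
    integrable_finset_sum _ fun i _ => ((log_integral (lam i) (hlam i)).2.const_mul (a i))
  have hgNint : IntegrableOn gN (Ioi (0:ℝ)) :=
    integrable_finset_sum _ fun i _ => ((log_integral (mu i) (hmu i)).2.const_mul (b i))
  have hgMval : (∫ t in Ioi (0:ℝ), gM t) = ∑ i, a i * Real.log (lam i) := by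
    rw [hgMdef]
    rw [integral_finset_sum _ fun i _ => ((log_integral (lam i) (hlam i)).2.const_mul (a i))]
    exact Finset.sum_congr rfl fun i _ => by
      rw [integral_const_mul, (log_integral (lam i) (hlam i)).1]
  have hgNval : (∫ t in Ioi (0:ℝ), gN t) = ∑ i, b i * Real.log (mu i) := by
    rw [hgNdef]
    rw [integral_finset_sum _ fun i _ => ((log_integral (mu i) (hmu i)).2.const_mul (b i))]
    exact Finset.sum_congr rfl fun i _ => by
      rw [integral_const_mul, (log_integral (mu i) (hmu i)).1]
  -- quadratic forms via the integral representation
  have hQM : x ⬝ᵥ (matFun Real.log M hM.1 *ᵥ x) = ∑ i, a i * Real.log (lam i) := by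
    rw [dot_matFun]
    exact Finset.sum_congr rfl fun i _ => mul_comm _ _
  have hQN : x ⬝ᵥ (matFun Real.log N hN.1 *ᵥ x) = ∑ i, b i * Real.log (mu i) := by
    rw [dot_matFun]
    exact Finset.sum_congr rfl fun i _ => mul_comm _ _
  -- pointwise inequality on (0, ∞)
  have hpt : ∀ t ∈ Ioi (0:ℝ), gM t ≤ gN t := by
    intro t ht
    have ht0 : (0:ℝ) < t := ht
    have hsmul : (t • (1 : Matrix (Fin d) (Fin d) ℝ)).PosSemidef := by
      rw [Matrix.smul_one_eq_diagonal]
      exact Matrix.PosSemidef.diagonal fun i => ht0.le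
    have hMt : (M + t • (1 : Matrix (Fin d) (Fin d) ℝ)).PosDef := hM.add_posSemidef hsmul
    have hNt : (N + t • (1 : Matrix (Fin d) (Fin d) ℝ)).PosDef := hN.add_posSemidef hsmul
    have hdiff : ((N + t • (1 : Matrix (Fin d) (Fin d) ℝ)) -
        (M + t • (1 : Matrix (Fin d) (Fin d) ℝ))).PosSemidef := by
      have e : (N + t • (1 : Matrix (Fin d) (Fin d) ℝ)) -
          (M + t • (1 : Matrix (Fin d) (Fin d) ℝ)) = N - M := by abel
      rw [e]; exact hMN
    have hinv := inv_antitone hMt hNt hdiff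
    have hq := hinv.dotProduct_mulVec_nonneg x
    rw [star_trivial, sub_mulVec, dotProduct_sub, sub_nonneg] at hq
    have hMinv : x ⬝ᵥ ((M + t • (1 : Matrix (Fin d) (Fin d) ℝ))⁻¹ *ᵥ x)
        = ∑ i, a i * (lam i + t)⁻¹ := by
      rw [matFun_inv t hM.1 (fun i => by have := hlam i; positivity), dot_matFun]
      exact Finset.sum_congr rfl fun i _ => mul_comm _ _
    have hNinv : x ⬝ᵥ ((N + t • (1 : Matrix (Fin d) (Fin d) ℝ))⁻¹ *ᵥ x)
        = ∑ i, b i * (mu i + t)⁻¹ := by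
      rw [matFun_inv t hN.1 (fun i => by have := hmu i; positivity), dot_matFun]
      exact Finset.sum_congr rfl fun i _ => mul_comm _ _
    rw [hMinv, hNinv] at hq
    have e : gN t - gM t = (∑ i, a i * (lam i + t)⁻¹) - ∑ i, b i * (mu i + t)⁻¹ := by
      rw [hgMdef, hgNdef]
      simp only [mul_sub, Finset.sum_sub_distrib, ← Finset.sum_mul, hsum]
      ring
    linarith
  -- conclude
  have hint : (∫ t in Ioi (0:ℝ), gM t) ≤ ∫ t in Ioi (0:ℝ), gN t := by
    refine setIntegral_mono_on hgMint hgNint measurableSet_Ioi hpt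
  rw [hQM, hQN, ← hgMval, ← hgNval]
  exact hint
end

section
/- Let L > 0 and t ∈ ℝ, and let X be a d×d random real symmetric matrix with 0 ⪯ X ⪯ L·I almost surely. Then E[exp(tX)] ⪯ I + ((e^{tL} − 1)/L) · E[X] ⪯ exp(((e^{tL} − 1)/L) · E[X]). -/
open Matrix MeasureTheory

noncomputable section MGFAux

variable {d : ℕ}

private lemma spectral_real {A : Matrix (Fin d) (Fin d) ℝ} (hA : A.IsHermitian) :
    A = (hA.eigenvectorUnitary : Matrix (Fin d) (Fin d) ℝ)
        * Matrix.diagonal hA.eigenvalues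
        * star (hA.eigenvectorUnitary : Matrix (Fin d) (Fin d) ℝ) := by
  have h := hA.spectral_theorem
  simpa using h

private lemma star_mul_self_real {A : Matrix (Fin d) (Fin d) ℝ} (hA : A.IsHermitian) :
    star (hA.eigenvectorUnitary : Matrix (Fin d) (Fin d) ℝ)
      * (hA.eigenvectorUnitary : Matrix (Fin d) (Fin d) ℝ) = 1 :=
  Unitary.coe_star_mul_self hA.eigenvectorUnitary

private lemma mul_star_self_real {A : Matrix (Fin d) (Fin d) ℝ} (hA : A.IsHermitian) :
    (hA.eigenvectorUnitary : Matrix (Fin d) (Fin d) ℝ)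
      * star (hA.eigenvectorUnitary : Matrix (Fin d) (Fin d) ℝ) = 1 :=
  Unitary.coe_mul_star_self hA.eigenvectorUnitary

private lemma inv_eq_star {A : Matrix (Fin d) (Fin d) ℝ} (hA : A.IsHermitian) :
    (hA.eigenvectorUnitary : Matrix (Fin d) (Fin d) ℝ)⁻¹
      = star (hA.eigenvectorUnitary : Matrix (Fin d) (Fin d) ℝ) :=
  Matrix.inv_eq_left_inv (star_mul_self_real hA)

/-- Diagonalization of `exp (t • A)` for hermitian `A`. -/
private lemma exp_smul_eq {A : Matrix (Fin d) (Fin d) ℝ} (hA : A.IsHermitian) (t : ℝ) :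
    NormedSpace.exp (t • A)
      = (hA.eigenvectorUnitary : Matrix (Fin d) (Fin d) ℝ)
        * Matrix.diagonal (fun i => Real.exp (t * hA.eigenvalues i))
        * star (hA.eigenvectorUnitary : Matrix (Fin d) (Fin d) ℝ) := by
  set U : Matrix (Fin d) (Fin d) ℝ := (hA.eigenvectorUnitary : Matrix (Fin d) (Fin d) ℝ)
  have hU : IsUnit U :=
    @isUnit_of_invertible _ _ U (invertibleOfRightInverse (h := mul_star_self_real hA))
  have hdiag : Matrix.diagonal (fun i => t * hA.eigenvalues i)
      = t • Matrix.diagonal hA.eigenvalues := by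
    ext i j
    by_cases h : i = j <;> simp [h]
  have h1 : t • A = U * Matrix.diagonal (fun i => t * hA.eigenvalues i) * U⁻¹ := by
    rw [inv_eq_star hA, hdiag, Matrix.mul_smul, Matrix.smul_mul, ← spectral_real hA]
  rw [h1, Matrix.exp_conj U _ hU, Matrix.exp_diagonal, inv_eq_star hA]
  congr 2
  ext i
  simp [Pi.exp_def, ← Real.exp_eq_exp_ℝ]

/-- Diagonalization of `a • 1 + b • A` for hermitian `A`. -/
private lemma affine_eq {A : Matrix (Fin d) (Fin d) ℝ} (hA : A.IsHermitian) (a b : ℝ) :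
    a • (1 : Matrix (Fin d) (Fin d) ℝ) + b • A
      = (hA.eigenvectorUnitary : Matrix (Fin d) (Fin d) ℝ)
        * Matrix.diagonal (fun i => a + b * hA.eigenvalues i)
        * star (hA.eigenvectorUnitary : Matrix (Fin d) (Fin d) ℝ) := by
  set U : Matrix (Fin d) (Fin d) ℝ := (hA.eigenvectorUnitary : Matrix (Fin d) (Fin d) ℝ)
  have hdiag : Matrix.diagonal (fun i => a + b * hA.eigenvalues i)
      = a • (1 : Matrix (Fin d) (Fin d) ℝ) + b • Matrix.diagonal hA.eigenvalues := by
    ext i j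
    by_cases h : i = j <;> simp [h, Matrix.one_apply, Matrix.diagonal_apply]
  rw [hdiag, Matrix.mul_add, Matrix.add_mul]
  congr 1
  · rw [Matrix.mul_smul, Matrix.smul_mul, mul_one, mul_star_self_real hA]
  · rw [Matrix.mul_smul, Matrix.smul_mul, ← spectral_real hA]

private lemma conj_diag_psd {A : Matrix (Fin d) (Fin d) ℝ} (hA : A.IsHermitian)
    {f : Fin d → ℝ} (hf : ∀ i, 0 ≤ f i) :
    ((hA.eigenvectorUnitary : Matrix (Fin d) (Fin d) ℝ) * Matrix.diagonal f
      * star (hA.eigenvectorUnitary : Matrix (Fin d) (Fin d) ℝ)).PosSemidef := by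
  rw [Matrix.star_eq_conjTranspose]
  exact (Matrix.posSemidef_diagonal_iff.mpr hf).mul_mul_conjTranspose_same _

/-- If `exp (t λᵢ) ≤ a + b λᵢ` on the eigenvalues, then `a•1 + b•A - exp (t•A)` is PSD. -/
private lemma psd_affine_sub_exp {A : Matrix (Fin d) (Fin d) ℝ} (hA : A.IsHermitian)
    (a b t : ℝ)
    (h : ∀ i, Real.exp (t * hA.eigenvalues i) ≤ a + b * hA.eigenvalues i) :
    (a • (1 : Matrix (Fin d) (Fin d) ℝ) + b • A - NormedSpace.exp (t • A)).PosSemidef := by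
  rw [affine_eq hA a b, exp_smul_eq hA t, ← Matrix.sub_mul, ← Matrix.mul_sub,
    Matrix.diagonal_sub]
  exact conj_diag_psd hA fun i => sub_nonneg.mpr (h i)

/-- If `a + b λᵢ ≤ exp (t λᵢ)` on the eigenvalues, then `exp (t•A) - (a•1 + b•A)` is PSD. -/
private lemma psd_exp_sub_affine {A : Matrix (Fin d) (Fin d) ℝ} (hA : A.IsHermitian)
    (a b t : ℝ)
    (h : ∀ i, a + b * hA.eigenvalues i ≤ Real.exp (t * hA.eigenvalues i)) :
    (NormedSpace.exp (t • A) - (a • (1 : Matrix (Fin d) (Fin d) ℝ) + b • A)).PosSemidef := by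
  rw [affine_eq hA a b, exp_smul_eq hA t, ← Matrix.sub_mul, ← Matrix.mul_sub,
    Matrix.diagonal_sub]
  exact conj_diag_psd hA fun i => sub_nonneg.mpr (h i)

/-- Eigenvalue upper bound from `L•1 - A ⪰ 0`. -/
private lemma eigenvalues_le {A : Matrix (Fin d) (Fin d) ℝ} (hA : A.IsHermitian) {L : ℝ}
    (h : (L • (1 : Matrix (Fin d) (Fin d) ℝ) - A).PosSemidef) (i : Fin d) :
    hA.eigenvalues i ≤ L := by
  set U : Matrix (Fin d) (Fin d) ℝ := (hA.eigenvectorUnitary : Matrix (Fin d) (Fin d) ℝ)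
  have key : star U * (L • (1 : Matrix (Fin d) (Fin d) ℝ) - A) * U
      = Matrix.diagonal (fun i => L - hA.eigenvalues i) := by
    have h2 : star U * A * U = Matrix.diagonal hA.eigenvalues := by
      have := hA.conjStarAlgAut_star_eigenvectorUnitary
      simpa [Unitary.conjStarAlgAut_apply] using this
    rw [Matrix.mul_sub, Matrix.sub_mul, h2, Matrix.mul_smul, mul_one, Matrix.smul_mul,
      star_mul_self_real hA, Matrix.smul_one_eq_diagonal, Matrix.diagonal_sub]
  have hpsd : (Matrix.diagonal (fun i => L - hA.eigenvalues i)).PosSemidef := by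
    rw [← key]
    have := h.conjTranspose_mul_mul_same U
    rwa [← Matrix.star_eq_conjTranspose] at this
  have := Matrix.posSemidef_diagonal_iff.mp hpsd i
  linarith

/-- Scalar convexity bound: for `0 ≤ x ≤ L`, `exp (t x) ≤ 1 + (exp (t L) - 1)/L * x`. -/
private lemma scalar_bound (L t : ℝ) (hL : 0 < L) {x : ℝ} (h0 : 0 ≤ x) (hxL : x ≤ L) :
    Real.exp (t * x) ≤ 1 + (Real.exp (t * L) - 1) / L * x := by
  have ha : (0 : ℝ) ≤ 1 - x / L := by
    rw [sub_nonneg]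
    exact div_le_one_of_le₀ hxL hL.le
  have hb : (0 : ℝ) ≤ x / L := div_nonneg h0 hL.le
  have hab : (1 - x / L) + x / L = 1 := by ring
  have hc := convexOn_exp.2 (Set.mem_univ (0 : ℝ)) (Set.mem_univ (t * L)) ha hb hab
  have harg : (1 - x / L) • (0 : ℝ) + (x / L) • (t * L) = t * x := by
    simp only [smul_eq_mul]
    field_simp
    ring
  rw [harg] at hc
  calc Real.exp (t * x) ≤ (1 - x / L) • Real.exp 0 + (x / L) • Real.exp (t * L) := hc
    _ = 1 + (Real.exp (t * L) - 1) / L * x := by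
        rw [Real.exp_zero]
        simp only [smul_eq_mul]
        field_simp
        ring

/-- Entrywise integral of an a.e. PSD matrix-valued function is PSD. -/
private lemma integral_posSemidef {Ω : Type*} [MeasurableSpace Ω] {μ : Measure Ω}
    (M : Ω → Matrix (Fin d) (Fin d) ℝ)
    (hInt : ∀ i j, Integrable (fun ω => M ω i j) μ)
    (hpsd : ∀ᵐ ω ∂μ, (M ω).PosSemidef) :
    (Matrix.of fun i j => ∫ ω, M ω i j ∂μ).PosSemidef := by
  rw [Matrix.posSemidef_iff_dotProduct_mulVec]
  constructor
  · ext i j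
    simp only [Matrix.conjTranspose_apply, Matrix.of_apply, star_trivial]
    refine integral_congr_ae ?_
    filter_upwards [hpsd] with ω hω
    have := congrFun (congrFun hω.1 i) j
    simpa using this
  · intro x
    have hterm : ∀ i j, Integrable (fun ω => x i * (M ω i j * x j)) μ := fun i j =>
      (((hInt i j).mul_const (x j)).const_mul (x i))
    have hkey : star x ⬝ᵥ (Matrix.of fun i j => ∫ ω, M ω i j ∂μ) *ᵥ x
        = ∫ ω, star x ⬝ᵥ (M ω) *ᵥ x ∂μ := by
      have expand : ∀ (A : Matrix (Fin d) (Fin d) ℝ),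
          star x ⬝ᵥ A *ᵥ x = ∑ i, ∑ j, x i * (A i j * x j) := by
        intro A
        simp [dotProduct, Matrix.mulVec, Finset.mul_sum]
      rw [expand]
      have : ∀ ω, star x ⬝ᵥ (M ω) *ᵥ x = ∑ i, ∑ j, x i * (M ω i j * x j) :=
        fun ω => expand (M ω)
      simp only [this]
      rw [integral_finset_sum _ (fun i _ => integrable_finset_sum _ (fun j _ => hterm i j))]
      refine Finset.sum_congr rfl fun i _ => ?_
      rw [integral_finset_sum _ (fun j _ => hterm i j)]
      refine Finset.sum_congr rfl fun j _ => ?_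
      rw [integral_const_mul, integral_mul_const]
      simp
    rw [hkey]
    refine integral_nonneg_of_ae ?_
    filter_upwards [hpsd] with ω hω
    exact hω.dotProduct_mulVec_nonneg x

end MGFAux

/-- **MGF bound (Hoeffding-type).** Let `X` be a random `d × d` real symmetric matrix
with `0 ⪯ X ⪯ L·I` almost surely, `L > 0`, and `t ∈ ℝ`. Then
`E[exp(tX)] ⪯ I + ((e^{tL} − 1)/L) · E[X] ⪯ exp(((e^{tL} − 1)/L) · E[X])`,
where expectations are taken entrywise. -/
theorem mgf_bound {d : ℕ} {Ω : Type*} [MeasurableSpace Ω] (μ : Measure Ω)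
    [IsProbabilityMeasure μ] (L t : ℝ) (hL : 0 < L)
    (X : Ω → Matrix (Fin d) (Fin d) ℝ)
    (hsymm : ∀ ω, (X ω).IsHermitian)
    (hbound : ∀ᵐ ω ∂μ, (X ω).PosSemidef ∧ (L • (1 : Matrix (Fin d) (Fin d) ℝ) - X ω).PosSemidef)
    (hInt : ∀ i j, Integrable (fun ω => X ω i j) μ)
    (hIntExp : ∀ i j, Integrable (fun ω => NormedSpace.exp (t • X ω) i j) μ) :
    (1 + ((Real.exp (t * L) - 1) / L) • (Matrix.of fun i j => ∫ ω, X ω i j ∂μ)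
        - (Matrix.of fun i j => ∫ ω, NormedSpace.exp (t • X ω) i j ∂μ)).PosSemidef ∧
      (NormedSpace.exp (((Real.exp (t * L) - 1) / L) •
            (Matrix.of fun i j => ∫ ω, X ω i j ∂μ))
        - (1 + ((Real.exp (t * L) - 1) / L) •
            (Matrix.of fun i j => ∫ ω, X ω i j ∂μ))).PosSemidef := by
  set c : ℝ := (Real.exp (t * L) - 1) / L with hc
  constructor
  · -- Part 1
    have heq : (1 + c • (Matrix.of fun i j => ∫ ω, X ω i j ∂μ)
          - (Matrix.of fun i j => ∫ ω, NormedSpace.exp (t • X ω) i j ∂μ))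
        = Matrix.of fun i j =>
            ∫ ω, (1 + c • X ω - NormedSpace.exp (t • X ω)) i j ∂μ := by
      ext i j
      simp only [Matrix.sub_apply, Matrix.add_apply, Matrix.smul_apply, Matrix.of_apply,
        smul_eq_mul]
      have h1 : Integrable
          (fun ω => (1 : Matrix (Fin d) (Fin d) ℝ) i j + c * X ω i j) μ :=
        (integrable_const _).add ((hInt i j).const_mul c)
      rw [integral_sub h1 (hIntExp i j),
          integral_add (integrable_const _) ((hInt i j).const_mul c),
          integral_const, integral_const_mul]
      simp
    rw [heq]
    apply integral_posSemidef
    · intro i j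
      have : (fun ω => (1 + c • X ω - NormedSpace.exp (t • X ω)) i j)
          = fun ω => (1 : Matrix (Fin d) (Fin d) ℝ) i j + c * X ω i j
              - NormedSpace.exp (t • X ω) i j := by
        ext ω
        simp [smul_eq_mul]
      rw [this]
      exact ((integrable_const _).add ((hInt i j).const_mul c)).sub (hIntExp i j)
    · filter_upwards [hbound] with ω hω
      obtain ⟨h1, h2⟩ := hω
      have hA : (X ω).IsHermitian := hsymm ω
      have hb : ∀ i, Real.exp (t * hA.eigenvalues i) ≤ 1 + c * hA.eigenvalues i := by
        intro i
        have h0 : 0 ≤ hA.eigenvalues i := h1.eigenvalues_nonneg i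
        have hle : hA.eigenvalues i ≤ L := eigenvalues_le hA h2 i
        exact scalar_bound L t hL h0 hle
      have := psd_affine_sub_exp hA 1 c t hb
      rwa [one_smul] at this
  · -- Part 2
    set EX : Matrix (Fin d) (Fin d) ℝ := Matrix.of fun i j => ∫ ω, X ω i j ∂μ with hEX
    have hEXh : EX.IsHermitian := by
      ext i j
      simp only [hEX, Matrix.conjTranspose_apply, Matrix.of_apply, star_trivial]
      refine integral_congr_ae (Filter.Eventually.of_forall fun ω => ?_)
      have := congrFun (congrFun (hsymm ω) i) j
      simpa using this
    have hB : (c • EX).IsHermitian := by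
      ext i j
      simp only [Matrix.conjTranspose_apply, Matrix.smul_apply, star_trivial, smul_eq_mul]
      rw [← star_trivial (EX j i), ← Matrix.conjTranspose_apply, hEXh.eq]
    have hb : ∀ i, 1 + 1 * hB.eigenvalues i ≤ Real.exp (1 * hB.eigenvalues i) := by
      intro i
      simp only [one_mul]
      linarith [Real.add_one_le_exp (hB.eigenvalues i)]
    have := psd_exp_sub_affine hB 1 1 1 hb
    simpa [one_smul] using this
end

section
/- Let Z be a d×d positive semidefinite real symmetric matrix with ‖Z‖ > λ_min(Z) ≥ 0, and let φ : ℝ → ℝ be convex. Then the refined intrinsic-dimension bound is at least as tight as the intrinsic-dimension bound: updim(Z)·φ(‖Z‖) + lowdim(Z)·φ(λ_min(Z)) ≤ intdim(Z)·φ(‖Z‖) + (d − intdim(Z))·φ(0). -/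
open Matrix

/-- Largest eigenvalue of a real symmetric matrix (spectral norm for `Z ⪰ 0`). -/
noncomputable def lamMax {d : ℕ} {M : Matrix (Fin d) (Fin d) ℝ}
    (hM : M.IsHermitian) : ℝ := ⨆ i, hM.eigenvalues i

/-- Smallest eigenvalue of a real symmetric matrix. -/
noncomputable def lamMin {d : ℕ} {M : Matrix (Fin d) (Fin d) ℝ}
    (hM : M.IsHermitian) : ℝ := ⨅ i, hM.eigenvalues i

/-- Upper intrinsic dimension `updim(Z) = trace(Z − λ_min·I)/(‖Z‖ − λ_min)`. -/
noncomputable def updim {d : ℕ} {M : Matrix (Fin d) (Fin d) ℝ}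
    (hM : M.IsHermitian) : ℝ :=
  (M - lamMin hM • (1 : Matrix (Fin d) (Fin d) ℝ)).trace / (lamMax hM - lamMin hM)

/-- Lower intrinsic dimension `lowdim(Z) = d − updim(Z)`. -/
noncomputable def lowdim {d : ℕ} {M : Matrix (Fin d) (Fin d) ℝ}
    (hM : M.IsHermitian) : ℝ := (d : ℝ) - updim hM

/-- **The refined intrinsic-dimension bound is tighter.** For positive semidefinite `Z`
with `‖Z‖ > λ_min(Z) ≥ 0` and convex `φ`,
`updim(Z)·φ(‖Z‖) + lowdim(Z)·φ(λ_min(Z)) ≤ intdim(Z)·φ(‖Z‖) + (d − intdim(Z))·φ(0)`,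
where `intdim(Z) = trace(Z)/‖Z‖`. -/
theorem refined_bound_tighter {d : ℕ} (Z : Matrix (Fin d) (Fin d) ℝ) (hZ : Z.PosSemidef)
    (hgap : lamMin hZ.1 < lamMax hZ.1) (hmin : 0 ≤ lamMin hZ.1)
    (φ : ℝ → ℝ) (hφ : ConvexOn ℝ Set.univ φ) :
    updim hZ.1 * φ (lamMax hZ.1) + lowdim hZ.1 * φ (lamMin hZ.1)
      ≤ (Z.trace / lamMax hZ.1) * φ (lamMax hZ.1)
        + ((d : ℝ) - Z.trace / lamMax hZ.1) * φ 0 := by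
  set L := lamMax hZ.1 with hLdef
  set m := lamMin hZ.1 with hmdef
  have hgap' : (0:ℝ) < L - m := by linarith
  have hL0 : (0:ℝ) < L := lt_of_le_of_lt hmin hgap
  have hT : Z.trace = ∑ i, hZ.1.eigenvalues i := by
    conv_lhs => rw [hZ.1.spectral_theorem]
    rw [Unitary.conjStarAlgAut_apply, Matrix.trace_mul_cycle, Unitary.coe_star_mul_self, Matrix.one_mul,
      Matrix.trace_diagonal]
    simp
  have htrace : (Z - m • (1 : Matrix (Fin d) (Fin d) ℝ)).trace = Z.trace - d * m := by
    simp [Matrix.trace_sub, Matrix.trace_smul, Matrix.trace_one, smul_eq_mul, mul_comm]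
  have hu : updim hZ.1 = (Z.trace - d * m) / (L - m) := by
    rw [updim, htrace]
  have hTle : Z.trace ≤ d * L := by
    rw [hT]
    calc ∑ i, hZ.1.eigenvalues i ≤ ∑ _i : Fin d, L := by
          apply Finset.sum_le_sum
          intro i _
          exact le_ciSup (Set.Finite.bddAbove (Set.finite_range _)) i
      _ = d * L := by simp [mul_comm]
  have hdu : 0 ≤ (d : ℝ) - updim hZ.1 := by
    rw [hu]
    rw [sub_nonneg, div_le_iff₀ hgap']
    nlinarith
  have huL : updim hZ.1 * (L - m) = Z.trace - d * m := by
    rw [hu, div_mul_cancel₀ _ (ne_of_gt hgap')]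
  -- convexity
  have key : φ m ≤ (m / L) * φ L + (1 - m / L) * φ 0 := by
    have ha : 0 ≤ m / L := div_nonneg hmin hL0.le
    have hb : 0 ≤ 1 - m / L := by
      rw [sub_nonneg, div_le_one hL0]; linarith
    have := hφ.2 (Set.mem_univ L) (Set.mem_univ 0) ha hb (by ring)
    have hml : L * (m / L) = m := by field_simp
    simpa [smul_eq_mul, hml, mul_comm] using this
    
  have h1 : ((d:ℝ) - updim hZ.1) * φ m
      ≤ ((d:ℝ) - updim hZ.1) * ((m / L) * φ L + (1 - m / L) * φ 0) :=
    mul_le_mul_of_nonneg_left key hdu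
  rw [lowdim]
  have heq : updim hZ.1 * φ L + ((d:ℝ) - updim hZ.1) * ((m / L) * φ L + (1 - m / L) * φ 0)
      = (Z.trace / L) * φ L + ((d : ℝ) - Z.trace / L) * φ 0 := by
    field_simp
    linear_combination (φ L - φ 0) * huL
  linarith [h1, heq.le, heq.ge]
end
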